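/- With c = π/√6, the value of the entropy functional 𝒱_{η_𝒴} along the Vershik curve equals π·√(2/3); explicitly, ∫_0^∞ ( c·x·e^{-cx}/(1 - e^{-cx}) - ln(1 - e^{-cx}) ) dx = π·√(2/3). -/

import Mathlib

open MeasureTheory Real Set

lemma int_exp_aux {r : ℝ} (hr : 0 < r) :
    ∫ x in Ioi (0:ℝ), Real.exp (-(r * x)) = 1 / r := by
  have h := Real.integral_rpow_mul_exp_neg_mul_Ioi (a := 1) (by norm_num) hr
  simp only [sub_self, Real.rpow_zero, one_mul, Real.rpow_one, Real.Gamma_one, mul_one] at h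
  exact h

lemma int_x_exp_aux {r : ℝ} (hr : 0 < r) :
    ∫ x in Ioi (0:ℝ), x * Real.exp (-(r * x)) = 1 / r ^ 2 := by
  have h := Real.integral_rpow_mul_exp_neg_mul_Ioi (a := 2) (by norm_num) hr
  rw [show (2:ℝ) - 1 = 1 by norm_num] at h
  simp only [Real.rpow_one, Real.Gamma_two, mul_one] at h
  rw [h, show (2:ℝ) = ((2:ℕ):ℝ) by norm_num, Real.rpow_natCast]
  rw [div_pow, one_pow]

lemma integrableOn_x_exp {r : ℝ} (hr : 0 < r) :
    IntegrableOn (fun x : ℝ => x * Real.exp (-(r * x))) (Ioi 0) := by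
  have h := integrableOn_rpow_mul_exp_neg_mul_rpow (p := 1) (s := 1) (by norm_num) (by norm_num) hr
  refine h.congr_fun (fun x hx => ?_) measurableSet_Ioi
  simp [Real.rpow_one, neg_mul]

lemma integrableOn_exp' {r : ℝ} (hr : 0 < r) :
    IntegrableOn (fun x : ℝ => Real.exp (-(r * x))) (Ioi 0) := by
  have h := exp_neg_integrableOn_Ioi 0 hr
  refine h.congr_fun (fun x hx => ?_) measurableSet_Ioi
  simp [Real.rpow_one, neg_mul]

lemma pointwise_sum_aux {c : ℝ} (hc : 0 < c) {x : ℝ} (hx : 0 < x) :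
    ∑' n : ℕ, (c * (x * Real.exp (-(((n:ℝ)+1) * c * x))) +
        Real.exp (-(((n:ℝ)+1) * c * x)) / ((n:ℝ)+1)) =
      c * x * Real.exp (-c * x) / (1 - Real.exp (-c * x)) -
        Real.log (1 - Real.exp (-c * x)) := by
  set t := Real.exp (-c * x) with ht
  have ht0 : 0 < t := Real.exp_pos _
  have ht1 : t < 1 := by
    rw [ht, Real.exp_lt_one_iff]
    nlinarith
  have hpow : ∀ n : ℕ, Real.exp (-(((n:ℝ)+1) * c * x)) = t ^ (n+1) := by
    intro n
    rw [ht, ← Real.exp_nat_mul]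
    congr 1
    push_cast
    ring
  have hgeo : HasSum (fun n : ℕ => c * (x * t ^ (n+1))) (c * x * (t / (1 - t))) := by
    have h := ((hasSum_geometric_of_lt_one ht0.le ht1).mul_left t).mul_left (c * x)
    have he : (fun n : ℕ => c * (x * t ^ (n+1))) = fun n : ℕ => c * x * (t * t ^ n) := by
      funext n; rw [pow_succ']; ring
    have hv : c * x * (t / (1 - t)) = c * x * (t * (1 - t)⁻¹) := by
      rw [div_eq_mul_inv]
    rw [he, hv]; exact h
  have hlog : HasSum (fun n : ℕ => t ^ (n+1) / ((n:ℝ)+1)) (-Real.log (1 - t)) := by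
    have h := hasSum_pow_div_log_of_abs_lt_one (x := t) (abs_lt.mpr ⟨by linarith, ht1⟩)
    have he : (fun n : ℕ => t ^ (n+1) / ((n:ℝ)+1)) = fun n : ℕ => t ^ (n+1) / ((n:ℕ)+1 : ℕ) := by
      funext n; push_cast; ring
    rw [he]; exact_mod_cast h
  have htot := hgeo.add hlog
  have h2 : (fun n : ℕ => c * (x * Real.exp (-(((n:ℝ)+1) * c * x))) +
      Real.exp (-(((n:ℝ)+1) * c * x)) / ((n:ℝ)+1)) =
      fun n : ℕ => c * (x * t ^ (n+1)) + t ^ (n+1) / ((n:ℝ)+1) := by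
    funext n
    rw [hpow n]
  rw [h2, htot.tsum_eq]
  ring

lemma vershik_integral_aux {c : ℝ} (hc : 0 < c) :
    (∫ x in Ioi (0:ℝ),
        (c * x * Real.exp (-c * x) / (1 - Real.exp (-c * x)) -
          Real.log (1 - Real.exp (-c * x)))) = π ^ 2 / (3 * c) := by
  set F : ℕ → ℝ → ℝ := fun n x =>
    c * (x * Real.exp (-(((n:ℝ)+1) * c * x))) +
      Real.exp (-(((n:ℝ)+1) * c * x)) / ((n:ℝ)+1) with hF
  have ha : ∀ n : ℕ, (0:ℝ) < ((n:ℝ)+1) * c := fun n => by positivity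
  have hInt : ∀ n : ℕ, IntegrableOn (F n) (Ioi 0) := by
    intro n
    exact ((integrableOn_x_exp (ha n)).const_mul c).add
      ((integrableOn_exp' (ha n)).div_const _)
  have hval : ∀ n : ℕ, (∫ x in Ioi (0:ℝ), F n x) = 2 / (c * ((n:ℝ)+1)^2) := by
    intro n
    rw [hF]
    rw [integral_add ((integrableOn_x_exp (ha n)).const_mul c)
      ((integrableOn_exp' (ha n)).div_const _), MeasureTheory.integral_const_mul, integral_div,
      int_x_exp_aux (ha n), int_exp_aux (ha n)]
    have h1 : ((n:ℝ)+1) ≠ 0 := by positivity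
    field_simp
    ring
  have hnorm : ∀ n : ℕ, (∫ x in Ioi (0:ℝ), ‖F n x‖) = 2 / (c * ((n:ℝ)+1)^2) := by
    intro n
    rw [← hval n]
    refine setIntegral_congr_fun measurableSet_Ioi (fun x hx => ?_)
    have hx0 : 0 < x := hx
    exact Real.norm_of_nonneg (by positivity)
  have hsummable : Summable fun n : ℕ => ∫ x in Ioi (0:ℝ), ‖F n x‖ := by
    simp only [hnorm]
    have h1 : Summable (fun n : ℕ => 1 / ((n:ℝ)+1)^2) := by
      have h2 := (Real.summable_one_div_nat_pow (p := 2)).mpr (by norm_num)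
      have h3 := (summable_nat_add_iff (f := fun n : ℕ => 1 / (n:ℝ)^2) 1).mpr h2
      refine h3.congr fun n => ?_
      push_cast
      ring
    refine (h1.mul_left (2 / c)).congr fun n => ?_
    have h1 : ((n:ℝ)+1) ≠ 0 := by positivity
    field_simp
  have hsum_val : HasSum (fun n : ℕ => 2 / (c * ((n:ℝ)+1)^2)) (π ^ 2 / (3 * c)) := by
    have h0 := hasSum_zeta_two
    have h1 : HasSum (fun n : ℕ => 1 / ((n:ℝ)+1)^2) (π ^ 2 / 6) := by
      have h2 := (hasSum_nat_add_iff (f := fun n : ℕ => 1 / (n:ℝ)^2) 1).mpr (by simpa using h0)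
      refine h2.congr_fun fun n => ?_
      push_cast
      ring
    have h3 := h1.mul_left (2 / c)
    have he : (fun n : ℕ => 2 / c * (1 / ((n:ℝ)+1)^2)) = fun n : ℕ => 2 / (c * ((n:ℝ)+1)^2) := by
      funext n
      have h1 : ((n:ℝ)+1) ≠ 0 := by positivity
      field_simp
    rw [he] at h3
    have hv : 2 / c * (π ^ 2 / 6) = π ^ 2 / (3 * c) := by
      field_simp
      ring
    rwa [hv] at h3
  have key := MeasureTheory.integral_tsum_of_summable_integral_norm
    (μ := volume.restrict (Ioi 0)) hInt hsummable
  have hL : (∑' n : ℕ, ∫ x in Ioi (0:ℝ), F n x) = π ^ 2 / (3 * c) := by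
    simp only [hval]
    exact hsum_val.tsum_eq
  rw [← hL, key]
  refine setIntegral_congr_fun measurableSet_Ioi fun x hx => ?_
  exact (pointwise_sum_aux hc hx).symm

/-- **Entropy of the Vershik curve.** With `c = π/√6`, the entropy functional
`𝒱_{η_𝒴}` evaluated along the Vershik curve `e^{-cx} + e^{-cy} = 1` equals
`π·√(2/3)`:
`∫_0^∞ ( c·x·e^{-cx}/(1 - e^{-cx}) - ln(1 - e^{-cx}) ) dx = π·√(2/3)`. -/
theorem entropy_of_vershik_curve :
    (∫ x in Set.Ioi (0 : ℝ),
        ((Real.pi / Real.sqrt 6) * x * Real.exp (-(Real.pi / Real.sqrt 6) * x) /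
            (1 - Real.exp (-(Real.pi / Real.sqrt 6) * x)) -
          Real.log (1 - Real.exp (-(Real.pi / Real.sqrt 6) * x)))) =
      Real.pi * Real.sqrt (2 / 3) := by
  have h6 : (0:ℝ) < Real.sqrt 6 := Real.sqrt_pos.mpr (by norm_num)
  have hc : (0:ℝ) < π / Real.sqrt 6 := div_pos Real.pi_pos h6
  rw [vershik_integral_aux hc]
  have h23 : Real.sqrt (2 / 3) = Real.sqrt 6 / 3 := by
    rw [show (2/3 : ℝ) = 6 / 9 by norm_num, Real.sqrt_div (by norm_num) 9,
      show (9:ℝ) = 3 ^ 2 by norm_num, Real.sqrt_sq (by norm_num)]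
  rw [h23]
  field_simp
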